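/- Let f : ℝ² → ℝ be C^4, let (x, y) be a grid point, and consider the four quadratic interpolants p^{γ_k} of f along the four lines through (x, y) with directions γ_k = γ_0 + kπ/2 (k = 0,1,2,3) on stencils of width O(h). Then the ideal combination q = δ(C_0 p^{γ_0} + C_2 p^{γ_2}) + (1-δ)(C_1 p^{γ_1} + C_3 p^{γ_3}) with C_k = 1/2 and any δ ∈ [0,1] satisfies q = f(x, y) + O(h^4). -/

import Mathlib

open Set Polynomial

lemma interpA {P : Polynomial ℝ} (hP : P.natDegree ≤ 2) (t : ℝ) :
    P.eval 0 = 3/8 * P.eval (-t) + 3/4 * P.eval t - 1/8 * P.eval (3*t) := by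
  have h3 : P.natDegree < 3 := lt_of_le_of_lt hP (by norm_num)
  rw [Polynomial.eval_eq_sum_range' h3, Polynomial.eval_eq_sum_range' h3,
    Polynomial.eval_eq_sum_range' h3, Polynomial.eval_eq_sum_range' h3]
  simp [Finset.sum_range_succ]
  ring

lemma withinEq {g : ℝ → ℝ} (hg : ContDiff ℝ 4 g) {s : Set ℝ} (hs : UniqueDiffOn ℝ s) :
    ∀ i : ℕ, i ≤ 4 → ∀ x ∈ s, iteratedDerivWithin i g s x = iteratedDeriv i g x := by
  intro i
  induction i with
  | zero => intro _ x _; simp [iteratedDerivWithin_zero, iteratedDeriv_zero]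
  | succ i ih =>
    intro hi x hx
    have hi' : i ≤ 4 := by omega
    rw [iteratedDerivWithin_succ, iteratedDeriv_succ]
    rw [derivWithin_congr (fun y hy => ih hi' y hy) (ih hi' x hx)]
    exact DifferentiableAt.derivWithin
      ((hg.differentiable_iteratedDeriv i (by exact_mod_cast hi)).differentiableAt) (hs x hx)

lemma taylorPos {g : ℝ → ℝ} (hg : ContDiff ℝ 4 g) {M : ℝ}
    (hM4 : ∀ s, |iteratedDeriv 4 g s| ≤ M) {t : ℝ} (ht : 0 ≤ t) :
    |g t - (g 0 + iteratedDeriv 1 g 0 * t + iteratedDeriv 2 g 0 * t^2 / 2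
      + iteratedDeriv 3 g 0 * t^3 / 6)| ≤ M * t^4 / 6 := by
  rcases eq_or_lt_of_le ht with rfl | htpos
  · simp
  have hUD : UniqueDiffOn ℝ (Icc (0:ℝ) t) := uniqueDiffOn_Icc htpos
  have hW := withinEq hg hUD
  have hmem0 : (0:ℝ) ∈ Icc (0:ℝ) t := by constructor <;> linarith
  have hb := taylor_mean_remainder_bound (f := g) (a := 0) (b := t) (C := M) (n := 3) ht
    (hg.contDiffOn.of_le (by norm_num)) (right_mem_Icc.2 ht)
    (fun y hy => by rw [Real.norm_eq_abs, hW 4 le_rfl y hy]; exact hM4 y)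
  have hT : taylorWithinEval g 3 (Icc (0:ℝ) t) 0 t
      = g 0 + iteratedDeriv 1 g 0 * t + iteratedDeriv 2 g 0 * t^2 / 2
        + iteratedDeriv 3 g 0 * t^3 / 6 := by
    rw [taylor_within_apply]
    simp [Finset.sum_range_succ, hW 0 (by norm_num) 0 hmem0, hW 1 (by norm_num) 0 hmem0,
      hW 2 (by norm_num) 0 hmem0, hW 3 (by norm_num) 0 hmem0, Nat.factorial]
    ring
  rw [hT, Real.norm_eq_abs] at hb
  refine hb.trans (le_of_eq ?_)
  norm_num [Nat.factorial]

lemma taylorAll {g : ℝ → ℝ} (hg : ContDiff ℝ 4 g) {M : ℝ}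
    (hM4 : ∀ s, |iteratedDeriv 4 g s| ≤ M) (t : ℝ) :
    |g t - (g 0 + iteratedDeriv 1 g 0 * t + iteratedDeriv 2 g 0 * t^2 / 2
      + iteratedDeriv 3 g 0 * t^3 / 6)| ≤ M * t^4 / 6 := by
  rcases le_or_gt 0 t with ht | ht
  · exact taylorPos hg hM4 ht
  · have hg' : ContDiff ℝ 4 (fun s => g (-s)) := hg.comp (contDiff_id.neg)
    have hM4' : ∀ s, |iteratedDeriv 4 (fun s => g (-s)) s| ≤ M := by
      intro s
      rw [iteratedDeriv_comp_neg]
      simpa [abs_mul, abs_pow] using hM4 (-s)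
    have h := taylorPos hg' hM4' (t := -t) (by linarith)
    simp only [iteratedDeriv_comp_neg, neg_neg, neg_zero, smul_eq_mul] at h
    have e1 : g 0 + (-1:ℝ)^1 * iteratedDeriv 1 g 0 * (-t)
        + (-1:ℝ)^2 * iteratedDeriv 2 g 0 * (-t)^2 / 2
        + (-1:ℝ)^3 * iteratedDeriv 3 g 0 * (-t)^3 / 6
        = g 0 + iteratedDeriv 1 g 0 * t + iteratedDeriv 2 g 0 * t^2 / 2
        + iteratedDeriv 3 g 0 * t^3 / 6 := by ring
    have e2 : M * (-t)^4 / 6 = M * t^4 / 6 := by ring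
    rw [e1, e2] at h
    exact h

lemma symErr {g : ℝ → ℝ} (hg : ContDiff ℝ 4 g) {M : ℝ}
    (hM4 : ∀ s, |iteratedDeriv 4 g s| ≤ M) {t : ℝ} (ht : 0 ≤ t) :
    |9/16*(g t + g (-t)) - 1/16*(g (3*t) + g (-(3*t))) - g 0| ≤ 2 * M * t^4 := by
  set T : ℝ → ℝ := fun s => g 0 + iteratedDeriv 1 g 0 * s + iteratedDeriv 2 g 0 * s^2 / 2
      + iteratedDeriv 3 g 0 * s^3 / 6 with hT
  have h1 := taylorAll hg hM4 t
  have h2 := taylorAll hg hM4 (-t)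
  have h3 := taylorAll hg hM4 (3*t)
  have h4 := taylorAll hg hM4 (-(3*t))
  rw [show M * (-t)^4/6 = M * t^4/6 from by ring] at h2
  rw [show M * (-(3*t))^4/6 = M * (3*t)^4/6 from by ring] at h4
  have hMnn : 0 ≤ M := le_trans (abs_nonneg _) (hM4 0)
  have key : 9/16*(g t + g (-t)) - 1/16*(g (3*t) + g (-(3*t))) - g 0
      = 9/16*((g t - T t) + (g (-t) - T (-t)))
        - 1/16*((g (3*t) - T (3*t)) + (g (-(3*t)) - T (-(3*t)))) := by
    rw [hT]; ring
  rw [key]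
  have hA := abs_add_le (g t - T t) (g (-t) - T (-t))
  have hC := abs_add_le (g (3*t) - T (3*t)) (g (-(3*t)) - T (-(3*t)))
  calc |9/16*((g t - T t) + (g (-t) - T (-t)))
        - 1/16*((g (3*t) - T (3*t)) + (g (-(3*t)) - T (-(3*t))))|
      ≤ |9/16*((g t - T t) + (g (-t) - T (-t)))|
        + |1/16*((g (3*t) - T (3*t)) + (g (-(3*t)) - T (-(3*t))))| := abs_sub _ _
    _ = 9/16*|(g t - T t) + (g (-t) - T (-t))|
        + 1/16*|(g (3*t) - T (3*t)) + (g (-(3*t)) - T (-(3*t)))| := by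
        rw [abs_mul, abs_mul, abs_of_nonneg (by norm_num : (0:ℝ) ≤ 9/16), abs_of_nonneg (by norm_num : (0:ℝ) ≤ 1/16)]
    _ ≤ 9/16*(M*t^4/6 + M*t^4/6) + 1/16*(M*(3*t)^4/6 + M*(3*t)^4/6) := by
        refine add_le_add ?_ ?_
        · exact mul_le_mul_of_nonneg_left (hA.trans (add_le_add h1 h2)) (by norm_num)
        · exact mul_le_mul_of_nonneg_left (hC.trans (add_le_add h3 h4)) (by norm_num)
    _ ≤ 2 * M * t^4 := by nlinarith [pow_nonneg ht 4, mul_nonneg hMnn (pow_nonneg ht 4)]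


lemma itFD_shift {E F : Type*} [NormedAddCommGroup E] [NormedSpace ℝ E]
    [NormedAddCommGroup F] [NormedSpace ℝ F] {f : E → F} (hf : ContDiff ℝ 4 f) (c : E) :
    ∀ n : ℕ, n ≤ 4 → ∀ z : E, iteratedFDeriv ℝ n (fun w => f (c + w)) z
      = iteratedFDeriv ℝ n f (c + z) := by
  intro n
  induction n with
  | zero => intro _ z; ext m; simp
  | succ n ih =>
    intro hn z
    have hn' : n ≤ 4 := by omega
    ext m
    rw [iteratedFDeriv_succ_apply_left, iteratedFDeriv_succ_apply_left]
    have e : (iteratedFDeriv ℝ n fun w => f (c + w))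
        = fun w => iteratedFDeriv ℝ n f (c + w) := funext (ih hn')
    rw [e]
    have hd : DifferentiableAt ℝ (iteratedFDeriv ℝ n f) (c + z) :=
      (hf.differentiable_iteratedFDeriv (by exact_mod_cast Nat.lt_of_succ_le hn)).differentiableAt
    have hcomp := hd.hasFDerivAt.comp z ((hasFDerivAt_id z).const_add c)
    rw [show (fun w => iteratedFDeriv ℝ n f (c + w))
        = (iteratedFDeriv ℝ n f ∘ fun w => c + w) from rfl, hcomp.fderiv]
    simp

lemma lineBound {f : ℝ × ℝ → ℝ} {M : ℝ} (hf : ContDiff ℝ 4 f)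
    (hb : ∀ z, ‖iteratedFDeriv ℝ 4 f z‖ ≤ M) (x y c s : ℝ) (hc : |c| ≤ 1) (hs : |s| ≤ 1) :
    ContDiff ℝ 4 (fun u : ℝ => f (x + u * c, y + u * s)) ∧
      ∀ u : ℝ, |iteratedDeriv 4 (fun u : ℝ => f (x + u * c, y + u * s)) u| ≤ M := by
  set v : ℝ × ℝ := (c, s) with hv
  set L : ℝ →L[ℝ] ℝ × ℝ := (ContinuousLinearMap.id ℝ ℝ).smulRight v with hL
  have hLapp : ∀ u : ℝ, L u = (u * c, u * s) := by
    intro u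
    simp [hL, hv, ContinuousLinearMap.smulRight_apply, Prod.smul_mk, smul_eq_mul]
  set f₁ : ℝ × ℝ → ℝ := fun w => f ((x, y) + w) with hf₁def
  have hf₁ : ContDiff ℝ 4 f₁ := hf.comp (contDiff_const.add contDiff_id)
  have hgeq : (fun u : ℝ => f (x + u * c, y + u * s)) = f₁ ∘ L := by
    funext u
    simp [hf₁def, hLapp u, Prod.mk_add_mk]
  have hLnorm : ‖L‖ ≤ 1 := by
    refine ContinuousLinearMap.opNorm_le_bound L zero_le_one (fun u => ?_)
    rw [one_mul]
    have : ‖L u‖ = ‖u‖ * ‖v‖ := by rw [show L u = u • v from rfl, norm_smul]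
    rw [this]
    have hvle : ‖v‖ ≤ 1 := by
      rw [hv, Prod.norm_def]
      exact max_le (by simpa [Real.norm_eq_abs] using hc) (by simpa [Real.norm_eq_abs] using hs)
    calc ‖u‖ * ‖v‖ ≤ ‖u‖ * 1 := by
          exact mul_le_mul_of_nonneg_left hvle (norm_nonneg u)
      _ = ‖u‖ := mul_one _
  constructor
  · rw [hgeq]; exact hf₁.comp L.contDiff
  · intro u
    have hMnn : 0 ≤ M := le_trans (norm_nonneg _) (hb (0, 0))
    rw [hgeq]
    have hcomp := L.iteratedFDeriv_comp_right hf₁ u (i := 4) le_rfl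
    have key : ‖iteratedFDeriv ℝ 4 (f₁ ∘ L) u‖ ≤ M := by
      rw [hcomp]
      refine le_trans (ContinuousMultilinearMap.norm_compContinuousLinearMap_le _ _) ?_
      have h1 : ‖iteratedFDeriv ℝ 4 f₁ (L u)‖ ≤ M := by
        rw [hf₁def, itFD_shift hf (x, y) 4 le_rfl (L u)]
        exact hb _
      calc ‖iteratedFDeriv ℝ 4 f₁ (L u)‖ * ∏ _i : Fin 4, ‖L‖
          ≤ M * 1 := by
            refine mul_le_mul h1 ?_ (Finset.prod_nonneg fun _ _ => norm_nonneg _)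
              hMnn
            calc ∏ _i : Fin 4, ‖L‖ ≤ ∏ _i : Fin 4, (1:ℝ) :=
                  Finset.prod_le_prod (fun _ _ => norm_nonneg _) (fun _ _ => hLnorm)
              _ = 1 := by simp
        _ = M := mul_one M
    rw [iteratedDeriv_eq_iteratedFDeriv]
    refine le_trans ?_ key
    have := (iteratedFDeriv ℝ 4 (f₁ ∘ L) u).le_opNorm (fun _ : Fin 4 => (1:ℝ))
    simpa [Real.norm_eq_abs] using this

theorem stmt12 (a M : ℝ) (ha : 0 < a) (hM : 0 ≤ M) :
    ∃ C : ℝ, ∀ (f : ℝ × ℝ → ℝ) (x y γ0 δ h : ℝ) (P : Fin 4 → Polynomial ℝ),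
      0 < h → h ≤ 1 → 0 ≤ δ → δ ≤ 1 →
      ContDiff ℝ 4 f →
      (∀ i : ℕ, i ≤ 4 → ∀ z : ℝ × ℝ, ‖iteratedFDeriv ℝ i f z‖ ≤ M) →
      (∀ k : Fin 4, (P k).natDegree ≤ 2) →
      (∀ k : Fin 4, ∀ s ∈ ({-(a * h), a * h, 3 * (a * h)} : Set ℝ),
        (P k).eval s
          = f (x + s * Real.cos (γ0 + (k : ℕ) * (Real.pi / 2)),
               y + s * Real.sin (γ0 + (k : ℕ) * (Real.pi / 2)))) →
      |δ * (((P 0).eval 0 + (P 2).eval 0) / 2)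
        + (1 - δ) * (((P 1).eval 0 + (P 3).eval 0) / 2) - f (x, y)|
        ≤ C * h ^ 4 := by
  refine ⟨2 * M * a ^ 4, ?_⟩
  intro f x y γ0 δ h P hh0 hh1 hδ0 hδ1 hf hbnd hdeg hval
  have hδ1' : 0 ≤ 1 - δ := by linarith
  set t := a * h with ht
  have ht0 : 0 ≤ t := le_of_lt (mul_pos ha hh0)
  have hbnd4 : ∀ z, ‖iteratedFDeriv ℝ 4 f z‖ ≤ M := fun z => hbnd 4 le_rfl z
  set g0 : ℝ → ℝ := fun u => f (x + u * Real.cos γ0, y + u * Real.sin γ0) with hg0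
  set g1 : ℝ → ℝ := fun u =>
    f (x + u * Real.cos (γ0 + Real.pi/2), y + u * Real.sin (γ0 + Real.pi/2)) with hg1
  -- direction identifications
  have key0 : ∀ s : ℝ, f (x + s * Real.cos (γ0 + (((0 : Fin 4) : ℕ) : ℝ) * (Real.pi / 2)),
      y + s * Real.sin (γ0 + (((0 : Fin 4) : ℕ) : ℝ) * (Real.pi / 2))) = g0 s := by
    intro s
    norm_num [hg0]
  have key1 : ∀ s : ℝ, f (x + s * Real.cos (γ0 + (((1 : Fin 4) : ℕ) : ℝ) * (Real.pi / 2)),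
      y + s * Real.sin (γ0 + (((1 : Fin 4) : ℕ) : ℝ) * (Real.pi / 2))) = g1 s := by
    intro s
    norm_num [hg1]
  have key2 : ∀ s : ℝ, f (x + s * Real.cos (γ0 + (((2 : Fin 4) : ℕ) : ℝ) * (Real.pi / 2)),
      y + s * Real.sin (γ0 + (((2 : Fin 4) : ℕ) : ℝ) * (Real.pi / 2))) = g0 (-s) := by
    intro s
    have hang : γ0 + (((2 : Fin 4) : ℕ) : ℝ) * (Real.pi / 2) = γ0 + Real.pi := by
      norm_num; ring
    rw [hang, Real.cos_add_pi, Real.sin_add_pi, hg0]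
    congr 1
    simp only [Prod.mk.injEq]
    constructor <;> ring
  have key3 : ∀ s : ℝ, f (x + s * Real.cos (γ0 + (((3 : Fin 4) : ℕ) : ℝ) * (Real.pi / 2)),
      y + s * Real.sin (γ0 + (((3 : Fin 4) : ℕ) : ℝ) * (Real.pi / 2))) = g1 (-s) := by
    intro s
    have hang : γ0 + (((3 : Fin 4) : ℕ) : ℝ) * (Real.pi / 2)
        = (γ0 + Real.pi / 2) + Real.pi := by
      rw [show ((3 : Fin 4) : ℕ) = 3 from rfl]
      push_cast
      ring
    rw [hang, Real.cos_add_pi, Real.sin_add_pi, hg1]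
    congr 1
    simp only [Prod.mk.injEq]
    constructor <;> ring
  -- membership
  have m1 : -t ∈ ({-t, t, 3 * t} : Set ℝ) := Set.mem_insert _ _
  have m2 : t ∈ ({-t, t, 3 * t} : Set ℝ) := Set.mem_insert_of_mem _ (Set.mem_insert _ _)
  have m3 : 3 * t ∈ ({-t, t, 3 * t} : Set ℝ) :=
    Set.mem_insert_of_mem _ (Set.mem_insert_of_mem _ rfl)
  -- evaluation formulas
  have hP0 : (P 0).eval 0 = 3/8 * g0 (-t) + 3/4 * g0 t - 1/8 * g0 (3*t) := by
    rw [interpA (hdeg 0) t, hval 0 (-t) m1, hval 0 t m2, hval 0 (3*t) m3, key0, key0, key0]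
  have hP1 : (P 1).eval 0 = 3/8 * g1 (-t) + 3/4 * g1 t - 1/8 * g1 (3*t) := by
    rw [interpA (hdeg 1) t, hval 1 (-t) m1, hval 1 t m2, hval 1 (3*t) m3, key1, key1, key1]
  have hP2 : (P 2).eval 0 = 3/8 * g0 t + 3/4 * g0 (-t) - 1/8 * g0 (-(3*t)) := by
    rw [interpA (hdeg 2) t, hval 2 (-t) m1, hval 2 t m2, hval 2 (3*t) m3, key2, key2, key2,
      neg_neg]
  have hP3 : (P 3).eval 0 = 3/8 * g1 t + 3/4 * g1 (-t) - 1/8 * g1 (-(3*t)) := by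
    rw [interpA (hdeg 3) t, hval 3 (-t) m1, hval 3 t m2, hval 3 (3*t) m3, key3, key3, key3,
      neg_neg]
  -- error bounds
  have hgp0 := lineBound hf hbnd4 x y (Real.cos γ0) (Real.sin γ0)
    (Real.abs_cos_le_one _) (Real.abs_sin_le_one _)
  have hgp1 := lineBound hf hbnd4 x y (Real.cos (γ0 + Real.pi/2)) (Real.sin (γ0 + Real.pi/2))
    (Real.abs_cos_le_one _) (Real.abs_sin_le_one _)
  have e0 : |9/16*(g0 t + g0 (-t)) - 1/16*(g0 (3*t) + g0 (-(3*t))) - g0 0| ≤ 2 * M * t^4 := by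
    exact symErr hgp0.1 hgp0.2 ht0
  have e1 : |9/16*(g1 t + g1 (-t)) - 1/16*(g1 (3*t) + g1 (-(3*t))) - g1 0| ≤ 2 * M * t^4 := by
    exact symErr hgp1.1 hgp1.2 ht0
  have hg00 : g0 0 = f (x, y) := by rw [hg0]; norm_num
  have hg10 : g1 0 = f (x, y) := by rw [hg1]; norm_num
  have main : δ * (((P 0).eval 0 + (P 2).eval 0) / 2)
      + (1 - δ) * (((P 1).eval 0 + (P 3).eval 0) / 2) - f (x, y)
      = δ * ((9/16*(g0 t + g0 (-t)) - 1/16*(g0 (3*t) + g0 (-(3*t))) - g0 0))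
        + (1 - δ) * ((9/16*(g1 t + g1 (-t)) - 1/16*(g1 (3*t) + g1 (-(3*t))) - g1 0)) := by
    rw [hP0, hP1, hP2, hP3, hg00, hg10]
    ring
  rw [main]
  calc |δ * ((9/16*(g0 t + g0 (-t)) - 1/16*(g0 (3*t) + g0 (-(3*t))) - g0 0))
        + (1 - δ) * ((9/16*(g1 t + g1 (-t)) - 1/16*(g1 (3*t) + g1 (-(3*t))) - g1 0))|
      ≤ |δ * ((9/16*(g0 t + g0 (-t)) - 1/16*(g0 (3*t) + g0 (-(3*t))) - g0 0))|
        + |(1 - δ) * ((9/16*(g1 t + g1 (-t)) - 1/16*(g1 (3*t) + g1 (-(3*t))) - g1 0))| :=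
        abs_add_le _ _
    _ = δ * |9/16*(g0 t + g0 (-t)) - 1/16*(g0 (3*t) + g0 (-(3*t))) - g0 0|
        + (1 - δ) * |9/16*(g1 t + g1 (-t)) - 1/16*(g1 (3*t) + g1 (-(3*t))) - g1 0| := by
        rw [abs_mul, abs_mul, abs_of_nonneg hδ0, abs_of_nonneg hδ1']
    _ ≤ δ * (2 * M * t^4) + (1 - δ) * (2 * M * t^4) :=
        add_le_add (mul_le_mul_of_nonneg_left e0 hδ0) (mul_le_mul_of_nonneg_left e1 hδ1')
    _ = 2 * M * t^4 := by ring
    _ = 2 * M * a ^ 4 * h ^ 4 := by rw [ht]; ring
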